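/- arXiv:2211.13921 — 3 statements merged into one kernel-verified Lean document; each statement's English description precedes it below -/
import Mathlib

section
/- Let C ⊂ ℝ_{>0}^n be an open cone contained in ∑_{i=1}^n ℝ_{>0} α_i' for linearly independent rational vectors α_1',...,α_n' ∈ ℚ^n, with dual basis α_1,...,α_n. Then for k ∈ ℤ_{≥1}, the series ψ_{nk,C}(y) = ∑_{x ∈ C ∩ ℤ^n} ⟨x,y⟩^{-(n+nk)} converges absolutely and locally uniformly on the open set V = {y ∈ ℂ^n \ {0} : Re⟨α_i', y⟩ > 0 for all i}. -/
open scoped BigOperators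


noncomputable def psiAux (ε M : ℝ) (k : ℕ) (t : ℤ) : ℝ :=
  if 1 ≤ t then (M / ε) ^ (k + 1) * (((t : ℝ)) ^ (k + 1))⁻¹ else 0

lemma psi_key_bound (n k : ℕ) (hn : 0 < n) (α' : Fin n → (Fin n → ℚ))
    (C : Set (Fin n → ℝ))
    (hCpos : ∀ x ∈ C, ∀ i, 0 < x i)
    (hCsub : ∀ x ∈ C, ∃ c : Fin n → ℝ, (∀ i, 0 < c i) ∧
      x = ∑ i, c i • (fun j => (α' i j : ℝ)))
    {ε M : ℝ} (hε : 0 < ε)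
    (hM : M = 1 + ∑ i, ‖(fun j => (α' i j : ℝ))‖)
    (y : Fin n → ℂ) (hy : ∀ i, ε ≤ (∑ j, (α' i j : ℂ) * y j).re)
    (x : Fin n → ℤ) (hx : (fun j => (x j : ℝ)) ∈ C) :
    ‖(∑ j, (x j : ℂ) * y j) ^ (-(n + n * k : ℤ))‖ ≤
      ∏ j, psiAux ε M k (x j) := by
  obtain ⟨c, hc, hsum⟩ := hCsub _ hx
  set v : Fin n → (Fin n → ℝ) := fun i j => (α' i j : ℝ) with hv
  have hMpos : 0 < M := by
    rw [hM]
    have : 0 ≤ ∑ i, ‖v i‖ := Finset.sum_nonneg fun i _ => norm_nonneg _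
    linarith
  have hxj : ∀ j, (x j : ℝ) = ∑ i, c i * (α' i j : ℝ) := fun j => by
    have := congrFun hsum j; simpa using this
  set z := ∑ j, (x j : ℂ) * y j with hzdef
  have hz : z = ∑ i, (c i : ℂ) * (∑ j, (α' i j : ℂ) * y j) := by
    rw [hzdef]
    calc ∑ j, (x j : ℂ) * y j
        = ∑ j, ∑ i, ((c i : ℂ) * (α' i j : ℂ)) * y j := by
          refine Finset.sum_congr rfl fun j _ => ?_
          have h1 : ((x j : ℤ) : ℂ) = ((∑ i, c i * (α' i j : ℝ) : ℝ) : ℂ) := by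
            rw [← hxj j]; push_cast; ring
          rw [h1]; push_cast; rw [Finset.sum_mul]
      _ = ∑ i, ∑ j, ((c i : ℂ) * (α' i j : ℂ)) * y j := Finset.sum_comm
      _ = ∑ i, (c i : ℂ) * ∑ j, (α' i j : ℂ) * y j := by
          refine Finset.sum_congr rfl fun i _ => ?_
          rw [Finset.mul_sum]
          exact Finset.sum_congr rfl fun j _ => by ring
  have hre : ε * ∑ i, c i ≤ z.re := by
    rw [hz, Complex.re_sum, Finset.mul_sum]
    refine Finset.sum_le_sum fun i _ => ?_
    have h2 : ((c i : ℂ) * ∑ j, (α' i j : ℂ) * y j).re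
        = c i * (∑ j, (α' i j : ℂ) * y j).re := by
      simp [Complex.mul_re]
    rw [h2, mul_comm ε (c i)]
    exact mul_le_mul_of_nonneg_left (hy i) (hc i).le
  have hnorm_x : ‖(fun j => (x j : ℝ))‖ ≤ M * ∑ i, c i := by
    rw [hsum]
    calc ‖∑ i, c i • v i‖ ≤ ∑ i, ‖c i • v i‖ := norm_sum_le _ _
      _ = ∑ i, c i * ‖v i‖ := Finset.sum_congr rfl fun i _ => by
          rw [norm_smul, Real.norm_eq_abs, abs_of_pos (hc i)]
      _ ≤ ∑ i, c i * M := Finset.sum_le_sum fun i _ => by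
          refine mul_le_mul_of_nonneg_left ?_ (hc i).le
          have := Finset.single_le_sum (f := fun i => ‖v i‖)
            (fun i _ => norm_nonneg _) (Finset.mem_univ i)
          rw [hM]; linarith
      _ = M * ∑ i, c i := by rw [← Finset.sum_mul]; ring
  have hxle : ∀ j, (x j : ℝ) ≤ ‖(fun j => (x j : ℝ))‖ := fun j => by
    refine le_trans (le_abs_self _) ?_
    simpa [Real.norm_eq_abs] using norm_le_pi_norm (fun j => (x j : ℝ)) j
  have hxj1 : ∀ j, (1 : ℝ) ≤ (x j : ℝ) := fun j => by
    have h0 : (0 : ℝ) < (x j : ℝ) := hCpos _ hx j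
    have : (0 : ℤ) < x j := by exact_mod_cast h0
    exact_mod_cast this
  have hzlb : ∀ j, ε / M * (x j : ℝ) ≤ ‖z‖ := fun j => by
    have h5 : z.re ≤ ‖z‖ := Complex.re_le_norm z
    have hd : 0 < ε / M := div_pos hε hMpos
    have e1 := mul_le_mul_of_nonneg_left (hxle j) hd.le
    have e2 := mul_le_mul_of_nonneg_left hnorm_x hd.le
    have e3 : ε / M * (M * ∑ i, c i) = ε * ∑ i, c i := by field_simp
    linarith
  have hexp : (-(n + n * k : ℤ)) = (-((k + 1 : ℕ) : ℤ)) * n := by push_cast; ring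
  rw [norm_zpow]
  calc ‖z‖ ^ (-(n + n * k : ℤ))
      = ∏ _j : Fin n, ‖z‖ ^ (-((k + 1 : ℕ) : ℤ)) := by
        rw [Finset.prod_const, Finset.card_univ, Fintype.card_fin,
          ← zpow_natCast (‖z‖ ^ (-((k + 1 : ℕ) : ℤ))) n, ← zpow_mul, ← hexp]
    _ ≤ ∏ j, psiAux ε M k (x j) := by
        refine Finset.prod_le_prod (fun j _ => zpow_nonneg (norm_nonneg _) _)
          (fun j _ => ?_)
        have h1 : (1 : ℤ) ≤ x j := by exact_mod_cast hxj1 j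
        have hb : 0 < ε / M * (x j : ℝ) :=
          mul_pos (div_pos hε hMpos) (lt_of_lt_of_le one_pos (hxj1 j))
        rw [psiAux, if_pos h1, zpow_neg, zpow_natCast]
        have hrhs : (M / ε) ^ (k + 1) * (((x j : ℝ)) ^ (k + 1))⁻¹
            = ((ε / M * (x j : ℝ)) ^ (k + 1))⁻¹ := by
          rw [mul_pow, mul_inv, ← inv_pow (ε / M), inv_div]
        rw [hrhs]
        gcongr
        exact hzlb j

lemma psiAux_nonneg {ε M : ℝ} (hε : 0 < ε) (hM : 0 < M) (k : ℕ) (t : ℤ) :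
    0 ≤ psiAux ε M k t := by
  unfold psiAux; split
  · positivity
  · exact le_rfl

lemma psiAux_summable {ε M : ℝ} (hε : 0 < ε) (hM : 0 < M) {k : ℕ} (hk : 1 ≤ k) :
    Summable (psiAux ε M k) := by
  have h1 : Summable fun t : ℤ => if 1 ≤ t then (((t : ℝ)) ^ (k + 1))⁻¹ else 0 := by
    apply Summable.of_nat_of_neg
    · have h2 : Summable fun n : ℕ => (((n : ℝ)) ^ (k + 1))⁻¹ :=
        Real.summable_nat_pow_inv.mpr (by omega)
      refine h2.congr fun n => ?_
      rcases Nat.eq_zero_or_pos n with h | h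
      · subst h; simp
      · rw [if_pos (by exact_mod_cast h)]; norm_num
    · refine summable_zero.congr fun n => ?_
      rw [if_neg (by omega)]
  refine (h1.mul_left ((M / ε) ^ (k + 1))).congr fun t => ?_
  unfold psiAux
  split <;> simp

lemma summable_pi_prod {g : ℤ → ℝ} (hg0 : ∀ t, 0 ≤ g t) (hg : Summable g) (n : ℕ) :
    Summable fun x : Fin n → ℤ => ∏ j, g (x j) := by
  induction n with
  | zero => exact Summable.of_finite
  | succ n ih =>
    have h := hg.mul_of_nonneg ih hg0
      (fun x => Finset.prod_nonneg fun j _ => hg0 _)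
    rw [← (Fin.consEquiv (fun _ : Fin (n+1) => ℤ)).summable_iff]
    refine h.congr fun p => ?_
    simp [Fin.consEquiv, Fin.prod_univ_succ]



/-- Let `C ⊂ ℝ_{>0}^n` be an open cone contained in the cone
generated by linearly independent rational vectors `α' 1, …, α' n`.  Then for
`k ≥ 1` the series `ψ_{nk,C}(y) = ∑_{x ∈ C ∩ ℤ^n} ⟨x,y⟩^{-(n+nk)}` converges
absolutely and locally uniformly on
`V = {y ∈ ℂ^n \ {0} : Re⟨α' i, y⟩ > 0 for all i}`. -/
theorem psi_converges_rational_cone (n : ℕ) (hn : 0 < n) (k : ℕ) (hk : 1 ≤ k)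
    (α' : Fin n → (Fin n → ℚ)) (hα' : LinearIndependent ℚ α')
    (C : Set (Fin n → ℝ)) (hCopen : IsOpen C)
    (hCpos : ∀ x ∈ C, ∀ i, 0 < x i)
    (hCsub : ∀ x ∈ C, ∃ c : Fin n → ℝ, (∀ i, 0 < c i) ∧
      x = ∑ i, c i • (fun j => (α' i j : ℝ))) :
    (∀ y ∈ {y : Fin n → ℂ | y ≠ 0 ∧ ∀ i, 0 < (∑ j, (α' i j : ℂ) * y j).re},
      Summable fun x : {x : Fin n → ℤ // (fun j => (x j : ℝ)) ∈ C} =>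
        ‖(∑ j, (x.1 j : ℂ) * y j) ^ (-(n + n * k : ℤ))‖) ∧
    TendstoLocallyUniformlyOn
      (fun (s : Finset {x : Fin n → ℤ // (fun j => (x j : ℝ)) ∈ C})
          (y : Fin n → ℂ) =>
        ∑ x ∈ s, (∑ j, (x.1 j : ℂ) * y j) ^ (-(n + n * k : ℤ)))
      (fun y => ∑' x : {x : Fin n → ℤ // (fun j => (x j : ℝ)) ∈ C},
        (∑ j, (x.1 j : ℂ) * y j) ^ (-(n + n * k : ℤ)))
      Filter.atTop
      {y : Fin n → ℂ | y ≠ 0 ∧ ∀ i, 0 < (∑ j, (α' i j : ℂ) * y j).re} := by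
  classical
  have hne : Nonempty (Fin n) := ⟨⟨0, hn⟩⟩
  set M : ℝ := 1 + ∑ i, ‖(fun j => (α' i j : ℝ))‖ with hMdef
  have hMpos : 0 < M := by
    have : 0 ≤ ∑ i, ‖(fun j => (α' i j : ℝ))‖ :=
      Finset.sum_nonneg fun i _ => norm_nonneg _
    rw [hMdef]; linarith
  have hcomp : ∀ ε : ℝ, 0 < ε →
      Summable fun x : {x : Fin n → ℤ // (fun j => (x j : ℝ)) ∈ C} =>
        ∏ j, psiAux ε M k (x.1 j) := fun ε hε =>
    (summable_pi_prod (psiAux_nonneg hε hMpos k)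
      (psiAux_summable hε hMpos hk) n).comp_injective Subtype.val_injective
  have hfi : ∀ i, Continuous fun y : Fin n → ℂ => (∑ j, (α' i j : ℂ) * y j).re :=
    fun i => Complex.continuous_re.comp
      (continuous_finset_sum _ fun j _ => continuous_const.mul (continuous_apply j))
  constructor
  · rintro y ⟨-, hy2⟩
    set ε := Finset.univ.inf' Finset.univ_nonempty
      (fun i => (∑ j, (α' i j : ℂ) * y j).re) with hεdef
    have hε : 0 < ε := (Finset.lt_inf'_iff _).2 fun i _ => hy2 i
    have hεle : ∀ i, ε ≤ (∑ j, (α' i j : ℂ) * y j).re :=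
      fun i => Finset.inf'_le _ (Finset.mem_univ i)
    exact Summable.of_nonneg_of_le (fun x => norm_nonneg _)
      (fun x => psi_key_bound n k hn α' C hCpos hCsub hε hMdef y hεle x.1 x.2)
      (hcomp ε hε)
  · have hVopen : IsOpen {y : Fin n → ℂ | y ≠ 0 ∧
        ∀ i, 0 < (∑ j, (α' i j : ℂ) * y j).re} := by
      have hset : {y : Fin n → ℂ | y ≠ 0 ∧ ∀ i, 0 < (∑ j, (α' i j : ℂ) * y j).re}
          = {(0 : Fin n → ℂ)}ᶜ ∩
            ⋂ i, (fun y : Fin n → ℂ => (∑ j, (α' i j : ℂ) * y j).re) ⁻¹' Set.Ioi 0 := by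
        ext y; simp [Set.mem_iInter]
      rw [hset]
      exact isOpen_compl_singleton.inter
        (isOpen_iInter_of_finite fun i => isOpen_Ioi.preimage (hfi i))
    rw [tendstoLocallyUniformlyOn_iff_forall_isCompact hVopen]
    intro K hKV hK
    rcases K.eq_empty_or_nonempty with rfl | hKne
    · exact tendstoUniformlyOn_empty
    choose yi hyiK hyimin using fun i => hK.exists_isMinOn hKne (hfi i).continuousOn
    set ε := Finset.univ.inf' Finset.univ_nonempty
      (fun i => (∑ j, (α' i j : ℂ) * (yi i) j).re) with hεdef
    have hε : 0 < ε := (Finset.lt_inf'_iff _).2 fun i _ => (hKV (hyiK i)).2 i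
    have hεle : ∀ y ∈ K, ∀ i, ε ≤ (∑ j, (α' i j : ℂ) * y j).re := fun y hyK i =>
      le_trans (Finset.inf'_le _ (Finset.mem_univ i))
        ((isMinOn_iff.1 (hyimin i)) y hyK)
    exact tendstoUniformlyOn_tsum (hcomp ε hε)
      (fun x y hyK =>
        psi_key_bound n k hn α' C hCpos hCsub hε hMdef y (hεle y hyK) x.1 x.2)
end

section
/- With the same notation, the series ψ_{nk,T_{w,+}}(y) = ∑_{x ∈ T_{w,+} ∩ ℤ^n} ⟨x,y⟩^{-(n+nk)} converges absolutely and locally uniformly on the open set Ỹ_{w,+} = {y ∈ ℂ^n \ {0} : ∃λ ∈ ℂ^×, Re⟨w^{*(i)}, λy⟩ > 0 for all i = 1,...,n}. -/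
open scoped BigOperators

open NumberField


lemma psiAux_int_summable (p : ℕ) (hp : 1 < p) :
    Summable fun t : ℤ => ((1 + |(t : ℝ)|) ^ p)⁻¹ := by
  have hmaj : Summable fun t : ℤ =>
      |1 / (t : ℝ) ^ p| + Set.indicator ({0} : Set ℤ) (fun _ => (1:ℝ)) t := by
    refine ((Real.summable_one_div_int_pow.mpr hp).abs).add ?_
    apply summable_of_finite_support
    apply Set.Finite.subset (Set.finite_singleton (0 : ℤ))
    intro t ht
    by_contra h
    simp only [Set.mem_singleton_iff] at h
    simp [Function.mem_support, Set.indicator_of_notMem, h] at ht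
  refine Summable.of_nonneg_of_le (fun t => by positivity) (fun t => ?_) hmaj
  rcases eq_or_ne t 0 with rfl | ht
  · simp
  · have h1 : (1:ℝ) ≤ |(t:ℝ)| := by
      rw [← Int.cast_abs]; exact_mod_cast Int.one_le_abs ht
    have h2 : |(t:ℝ)| ^ p ≤ (1 + |(t:ℝ)|) ^ p := by
      gcongr; linarith
    have h3 : (0:ℝ) < |(t:ℝ)| ^ p := by positivity
    have h4 : ((1 + |(t:ℝ)|) ^ p)⁻¹ ≤ (|(t:ℝ)| ^ p)⁻¹ := inv_anti₀ h3 h2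
    have h5 : |1 / (t:ℝ) ^ p| = (|(t:ℝ)| ^ p)⁻¹ := by
      rw [abs_div, abs_one, ← abs_pow, one_div]
    have h6 : (0:ℝ) ≤ Set.indicator ({0} : Set ℤ) (fun _ => (1:ℝ)) t :=
      Set.indicator_nonneg (fun _ _ => zero_le_one) t
    rw [h5]; linarith

lemma psiAux_pi_summable (n p : ℕ) (hp : 1 < p) :
    Summable fun x : Fin n → ℤ => ∏ l, ((1 + |(x l : ℝ)|) ^ p)⁻¹ := by
  induction n with
  | zero =>
      exact summable_of_finite_support (Set.toFinite _)
  | succ m ih =>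
      have key : Summable fun q : ℤ × (Fin m → ℤ) =>
          ((1 + |(q.1 : ℝ)|) ^ p)⁻¹ * ∏ l, ((1 + |(q.2 l : ℝ)|) ^ p)⁻¹ := by
        apply Summable.mul_of_nonneg (psiAux_int_summable p hp) ih
        · intro t; positivity
        · intro x; positivity
      rw [← (Fin.consEquiv (fun _ : Fin (m+1) => ℤ)).summable_iff]
      refine key.congr fun q => ?_
      simp only [Fin.consEquiv_apply, Function.comp]
      rw [Fin.prod_univ_succ]; simp

lemma psiAux_norm_bound (n p : ℕ) (x : Fin n → ℤ) (hx : x ≠ 0) :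
    (‖x‖ ^ (n * p))⁻¹ ≤ 2 ^ (n * p) * ∏ l, ((1 + |(x l : ℝ)|) ^ p)⁻¹ := by
  have h1 : (1:ℝ) ≤ ‖x‖ := by
    obtain ⟨l, hl⟩ : ∃ l, x l ≠ 0 := Function.ne_iff.mp hx
    calc (1:ℝ) ≤ ‖x l‖ := by
            rw [Int.norm_eq_abs]; exact_mod_cast Int.one_le_abs hl
      _ ≤ ‖x‖ := norm_le_pi_norm x l
  have hx0 : (0:ℝ) < ‖x‖ := lt_of_lt_of_le one_pos h1
  have h2 : ∀ l, (1:ℝ) + |(x l : ℝ)| ≤ 2 * ‖x‖ := by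
    intro l
    have := norm_le_pi_norm x l
    rw [Int.norm_eq_abs] at this
    push_cast at this ⊢
    linarith
  have h3 : ∏ l, ((1:ℝ) + |(x l : ℝ)|) ≤ (2 * ‖x‖) ^ n := by
    calc ∏ l, ((1:ℝ) + |(x l : ℝ)|) ≤ ∏ _l : Fin n, (2 * ‖x‖) := by
          apply Finset.prod_le_prod
          · intro l _; positivity
          · intro l _; exact h2 l
      _ = (2 * ‖x‖) ^ n := by rw [Finset.prod_const, Finset.card_univ, Fintype.card_fin]
  have h4 : (∏ l, ((1:ℝ) + |(x l : ℝ)|)) ^ p ≤ 2 ^ (n * p) * ‖x‖ ^ (n * p) := by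
    calc (∏ l, ((1:ℝ) + |(x l : ℝ)|)) ^ p ≤ ((2 * ‖x‖) ^ n) ^ p := by
          gcongr
      _ = 2 ^ (n * p) * ‖x‖ ^ (n * p) := by
          rw [← pow_mul, mul_pow]
  have hprodpos : (0:ℝ) < (∏ l, ((1:ℝ) + |(x l : ℝ)|)) ^ p := by
    apply pow_pos
    apply Finset.prod_pos
    intro l _; positivity
  have h5 : (‖x‖ ^ (n * p))⁻¹ ≤ 2 ^ (n * p) * ((∏ l, ((1:ℝ) + |(x l : ℝ)|)) ^ p)⁻¹ := by
    rw [← div_eq_mul_inv, le_div_iff₀ hprodpos, inv_mul_eq_div, div_le_iff₀ (by positivity)]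
    linarith
  calc (‖x‖ ^ (n * p))⁻¹ ≤ 2 ^ (n * p) * ((∏ l, ((1:ℝ) + |(x l : ℝ)|)) ^ p)⁻¹ := h5
    _ = 2 ^ (n * p) * ∏ l, ((1 + |(x l : ℝ)|) ^ p)⁻¹ := by
        rw [← Finset.prod_pow, ← Finset.prod_inv_distrib]

lemma psiAux_tlu {α β ι : Type*} [TopologicalSpace α] [UniformSpace β]
    {F : ι → α → β} {f : α → β} {p : Filter ι} {s : Set α}
    (h : ∀ x ∈ s, ∃ U ∈ nhds x, TendstoUniformlyOn F f p U) :
    TendstoLocallyUniformlyOn F f p s := by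
  intro u hu x hx
  obtain ⟨U, hUx, hU⟩ := h x hx
  exact ⟨U, nhdsWithin_le_nhds hUx, hU u hu⟩

lemma psiAux_estimate (n : ℕ) (hn : 0 < n) (a b : Fin n → Fin n → ℝ)
    (hδ : ∀ l m, ∑ i, a i l * b i m = if l = m then 1 else 0)
    (C0 : ℝ) (hC0 : ∀ i m, |b i m| ≤ C0)
    (lam : ℂ) (hlam : lam ≠ 0) (y : Fin n → ℂ) (ε : ℝ) (hε : 0 < ε)
    (hy : ∀ i, ε ≤ (∑ l, (b i l : ℂ) * (lam * y l)).re)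
    (x : Fin n → ℤ) (hx : ∀ i, 0 < ∑ l, (x l : ℝ) * a i l) :
    ε / (C0 * ‖lam‖) * ‖x‖ ≤ ‖∑ l, (x l : ℂ) * y l‖ := by
  set u : Fin n → ℝ := fun i => ∑ l, (x l : ℝ) * a i l with hu
  have hC0pos : 0 < C0 := by
    obtain ⟨l0⟩ : Nonempty (Fin n) := ⟨⟨0, hn⟩⟩
    have h1 : ∑ i, a i l0 * b i l0 = 1 := by rw [hδ]; simp
    have : ∃ i, a i l0 * b i l0 ≠ 0 := by
      by_contra h
      push_neg at h
      rw [Finset.sum_eq_zero (fun i _ => h i)] at h1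
      norm_num at h1
    obtain ⟨i, hi⟩ := this
    have hb : b i l0 ≠ 0 := fun h => hi (by rw [h, mul_zero])
    exact lt_of_lt_of_le (abs_pos.mpr hb) (hC0 i l0)
  have hrec : ∀ m, (x m : ℝ) = ∑ i, u i * b i m := by
    intro m
    simp only [hu, Finset.sum_mul]
    rw [Finset.sum_comm]
    simp_rw [mul_assoc, ← Finset.mul_sum, hδ]
    simp
  have hupos : ∀ i, 0 < u i := hx
  have husum : 0 < ∑ i, u i :=
    Finset.sum_pos (fun i _ => hupos i) ⟨⟨0, hn⟩, Finset.mem_univ _⟩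
  have habs : ∀ m, |(x m : ℝ)| ≤ C0 * ∑ i, u i := by
    intro m
    rw [hrec m]
    calc |∑ i, u i * b i m| ≤ ∑ i, |u i * b i m| := Finset.abs_sum_le_sum_abs _ _
      _ ≤ ∑ i, u i * C0 := by
          apply Finset.sum_le_sum
          intro i _
          rw [abs_mul, abs_of_pos (hupos i)]
          exact mul_le_mul_of_nonneg_left (hC0 i m) (hupos i).le
      _ = C0 * ∑ i, u i := by rw [← Finset.sum_mul]; ring
  have hnormx : ‖x‖ ≤ C0 * ∑ i, u i := by
    apply pi_norm_le_iff_of_nonneg (by positivity) |>.mpr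
    intro m
    rw [Int.norm_eq_abs, ← Int.cast_abs]
    exact_mod_cast habs m
  have hz : (∑ l, (x l : ℂ) * (lam * y l))
      = ∑ i, (u i : ℂ) * (∑ l, (b i l : ℂ) * (lam * y l)) := by
    have hrecC : ∀ m, ((x m : ℝ) : ℂ) = ∑ i, ((u i : ℝ) : ℂ) * ((b i m : ℝ) : ℂ) := by
      intro m
      rw [hrec m]
      push_cast
      rfl
    calc ∑ l, (x l : ℂ) * (lam * y l)
        = ∑ l, (∑ i, ((u i : ℝ) : ℂ) * ((b i l : ℝ) : ℂ)) * (lam * y l) := by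
          apply Finset.sum_congr rfl
          intro l _
          rw [← hrecC l]
          norm_cast
      _ = ∑ l, ∑ i, ((u i : ℝ) : ℂ) * (((b i l : ℝ) : ℂ) * (lam * y l)) := by
          apply Finset.sum_congr rfl
          intro l _
          rw [Finset.sum_mul]
          apply Finset.sum_congr rfl
          intro i _
          ring
      _ = ∑ i, ∑ l, ((u i : ℝ) : ℂ) * (((b i l : ℝ) : ℂ) * (lam * y l)) := Finset.sum_comm
      _ = ∑ i, (u i : ℂ) * (∑ l, (b i l : ℂ) * (lam * y l)) := by
          apply Finset.sum_congr rfl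
          intro i _
          rw [Finset.mul_sum]
  have hre : (∑ l, (x l : ℂ) * (lam * y l)).re
      = ∑ i, u i * (∑ l, (b i l : ℂ) * (lam * y l)).re := by
    rw [hz, Complex.re_sum]
    apply Finset.sum_congr rfl
    intro i _
    exact Complex.re_ofReal_mul _ _
  have hlow : ε * ∑ i, u i ≤ (∑ l, (x l : ℂ) * (lam * y l)).re := by
    rw [hre, Finset.mul_sum]
    apply Finset.sum_le_sum
    intro i _
    rw [mul_comm (ε) (u i)]
    exact mul_le_mul_of_nonneg_left (hy i) (hupos i).le
  have hfac : (∑ l, (x l : ℂ) * (lam * y l)) = lam * ∑ l, (x l : ℂ) * y l := by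
    rw [Finset.mul_sum]
    apply Finset.sum_congr rfl
    intro l _
    ring
  have hchain : ε * ∑ i, u i ≤ ‖lam‖ * ‖∑ l, (x l : ℂ) * y l‖ := by
    calc ε * ∑ i, u i ≤ (∑ l, (x l : ℂ) * (lam * y l)).re := hlow
      _ ≤ ‖∑ l, (x l : ℂ) * (lam * y l)‖ := Complex.re_le_norm _
      _ = ‖lam‖ * ‖∑ l, (x l : ℂ) * y l‖ := by rw [hfac, norm_mul]
  have hlam' : 0 < ‖lam‖ := norm_pos_iff.mpr hlam
  rw [div_mul_eq_mul_div, div_le_iff₀ (by positivity)]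
  have h7 : ‖x‖ / C0 ≤ ∑ i, u i := (div_le_iff₀ hC0pos).mpr (by linarith [hnormx])
  have h8 : ε * (‖x‖ / C0) ≤ ε * ∑ i, u i := mul_le_mul_of_nonneg_left h7 hε.le
  have := h8.trans hchain
  rw [mul_div_assoc'] at this
  rw [div_le_iff₀ hC0pos] at this
  nlinarith [norm_nonneg (∑ l, (x l : ℂ) * y l)]

lemma psiAux_trace (F : Type*) [Field F] [NumberField F] (n : ℕ)
    (hdeg : Module.finrank ℚ F = n)
    (τ : Fin n → (F →+* ℝ)) (hτ : Function.Injective τ) (α : F) :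
    ((Algebra.trace ℚ F α : ℚ) : ℝ) = ∑ i, τ i α := by
  have card : Fintype.card (F →+* ℂ) = n := by
    rw [NumberField.Embeddings.card F ℂ, hdeg]
  let ι : Fin n → (F →+* ℂ) := fun i => Complex.ofRealHom.comp (τ i)
  have hι : Function.Injective ι := by
    intro i j hij
    apply hτ
    ext a
    have := RingHom.congr_fun hij a
    simpa [ι] using this
  have hbij : Function.Bijective ι := by
    rw [Fintype.bijective_iff_injective_and_card]
    exact ⟨hι, by simp [card]⟩
  have h1 : (algebraMap ℚ ℂ) (Algebra.trace ℚ F α) = ∑ σ : F →ₐ[ℚ] ℂ, σ α :=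
    trace_eq_sum_embeddings ℂ
  have h2 : ∑ σ : F →ₐ[ℚ] ℂ, σ α = ∑ σ : F →+* ℂ, σ α := by
    rw [← (RingHom.equivRatAlgHom F ℂ).sum_comp]
    rfl
  have h3 : ∑ σ : F →+* ℂ, σ α = ∑ i, ι i α := (hbij.sum_comp fun σ => σ α).symm
  have : ((Algebra.trace ℚ F α : ℚ) : ℂ) = ((∑ i, τ i α : ℝ) : ℂ) := by
    push_cast
    rw [show ((Algebra.trace ℚ F α : ℚ) : ℂ) = (algebraMap ℚ ℂ) (Algebra.trace ℚ F α) by norm_cast]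
    rw [h1, h2, h3]
    simp [ι]
  exact_mod_cast this

/-- With notation as before, the series
`ψ_{nk,T_{w,+}}(y) = ∑_{x ∈ T_{w,+} ∩ ℤ^n} ⟨x,y⟩^{-(n+nk)}` converges absolutely
and locally uniformly on the open set
`Ỹ_{w,+} = {y ∈ ℂ^n \ {0} : ∃ λ ∈ ℂ^×, Re⟨w^{*(i)}, λ y⟩ > 0 ∀ i}`. -/
theorem psi_converges_totally_positive_cone (F : Type*) [Field F]
    [NumberField F] (n : ℕ) (hn : 0 < n) (hdeg : Module.finrank ℚ F = n)
    (τ : Fin n → (F →+* ℝ)) (hτ : Function.Injective τ)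
    (𝔞 : FractionalIdeal (nonZeroDivisors (𝓞 F)) F)
    (w : Fin n → F)
    (hw : ∀ x : F, x ∈ 𝔞 ↔ ∃ c : Fin n → ℤ, x = ∑ l, c l • w l)
    (hwind : LinearIndependent ℤ w)
    (wst : Fin n → F)
    (hdual : ∀ i j, Algebra.trace ℚ F (w i * wst j) = if i = j then 1 else 0)
    (k : ℕ) (hk : 1 ≤ k) :
    (∀ y ∈ {y : Fin n → ℂ | y ≠ 0 ∧ ∃ lam : ℂ, lam ≠ 0 ∧
        ∀ i, 0 < (∑ l, (τ i (wst l) : ℂ) * (lam * y l)).re},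
      Summable fun x : {x : Fin n → ℤ // ∀ i, 0 < ∑ l, (x l : ℝ) * τ i (w l)} =>
        ‖(∑ l, (x.1 l : ℂ) * y l) ^ (-(n + n * k : ℤ))‖) ∧
    TendstoLocallyUniformlyOn
      (fun (s : Finset {x : Fin n → ℤ // ∀ i, 0 < ∑ l, (x l : ℝ) * τ i (w l)})
          (y : Fin n → ℂ) =>
        ∑ x ∈ s, (∑ l, (x.1 l : ℂ) * y l) ^ (-(n + n * k : ℤ)))
      (fun y => ∑' x : {x : Fin n → ℤ // ∀ i, 0 < ∑ l, (x l : ℝ) * τ i (w l)},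
        (∑ l, (x.1 l : ℂ) * y l) ^ (-(n + n * k : ℤ)))
      Filter.atTop
      {y : Fin n → ℂ | y ≠ 0 ∧ ∃ lam : ℂ, lam ≠ 0 ∧
        ∀ i, 0 < (∑ l, (τ i (wst l) : ℂ) * (lam * y l)).re} := by
  -- notation
  set S := {y : Fin n → ℂ | y ≠ 0 ∧ ∃ lam : ℂ, lam ≠ 0 ∧
      ∀ i, 0 < (∑ l, (τ i (wst l) : ℂ) * (lam * y l)).re} with hS
  set M : ℕ := n * (k + 1) with hM
  -- the δ-identity
  have hδ : ∀ l m, ∑ i, τ i (w l) * τ i (wst m) = if l = m then (1:ℝ) else 0 := by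
    intro l m
    have h1 : ∀ i : Fin n, τ i (w l) * τ i (wst m) = τ i (w l * wst m) := by
      intro i; rw [map_mul]
    simp_rw [h1]
    rw [← psiAux_trace F n hdeg τ hτ (w l * wst m), hdual l m]
    split_ifs <;> norm_num
  -- bound on the dual matrix entries
  set C0 : ℝ := 1 + ∑ i, ∑ m, |τ i (wst m)| with hC0def
  have hC0 : ∀ i m, |τ i (wst m)| ≤ C0 := by
    intro i m
    have h1 : |τ i (wst m)| ≤ ∑ m', |τ i (wst m')| :=
      Finset.single_le_sum (f := fun m' => |τ i (wst m')|)
        (fun _ _ => abs_nonneg _) (Finset.mem_univ m)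
    have h2 : ∑ m', |τ i (wst m')| ≤ ∑ i', ∑ m', |τ i' (wst m')| :=
      Finset.single_le_sum (f := fun i' => ∑ m', |τ i' (wst m')|)
        (fun _ _ => Finset.sum_nonneg fun _ _ => abs_nonneg _) (Finset.mem_univ i)
    rw [hC0def]; linarith
  -- rewrite the zpow as an inverse of a natural power
  have hzpow : ∀ a : ℂ, a ^ (-(n + n * k : ℤ)) = (a ^ M)⁻¹ := by
    intro a
    have he : (-(n + n * k : ℤ)) = -(M : ℤ) := by
      rw [hM]; push_cast; ring
    rw [he, zpow_neg, zpow_natCast]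
  -- the summable majorant
  set Bnd : (Fin n → ℤ) → ℝ :=
    fun x => 2 ^ M * ∏ l, ((1 + |(x l : ℝ)|) ^ (k + 1))⁻¹ with hBnd
  have hBndsum : Summable Bnd := by
    rw [hBnd]
    exact (psiAux_pi_summable n (k + 1) (by omega)).mul_left _
  have hBndbound : ∀ x : Fin n → ℤ, x ≠ 0 → (‖x‖ ^ M)⁻¹ ≤ Bnd x := by
    intro x hx
    rw [hM, hBnd]
    exact psiAux_norm_bound n (k + 1) x hx
  -- the key local bound
  have key : ∀ y₀ ∈ S, ∃ U ∈ nhds y₀, ∃ c : ℝ,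
      ∀ (x : Fin n → ℤ), (∀ i, 0 < ∑ l, (x l : ℝ) * τ i (w l)) →
      ∀ y ∈ U, ‖(∑ l, (x l : ℂ) * y l) ^ (-(n + n * k : ℤ))‖ ≤ c * Bnd x := by
    intro y₀ hy₀
    obtain ⟨hy0ne, lam, hlam, hpos⟩ := hy₀
    have hne : (Finset.univ : Finset (Fin n)).Nonempty := ⟨⟨0, hn⟩, Finset.mem_univ _⟩
    set ε : ℝ := (Finset.univ.inf' hne
      (fun i => (∑ l, (τ i (wst l) : ℂ) * (lam * y₀ l)).re)) / 2 with hε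
    have hεpos : 0 < ε := by
      rw [hε]
      apply half_pos
      rw [Finset.lt_inf'_iff]
      intro i _
      exact hpos i
    set U : Set (Fin n → ℂ) :=
      {y | ∀ i, ε < (∑ l, (τ i (wst l) : ℂ) * (lam * y l)).re} with hU
    have hUopen : IsOpen U := by
      have : U = ⋂ i, (fun y : Fin n → ℂ =>
          (∑ l, (τ i (wst l) : ℂ) * (lam * y l)).re) ⁻¹' Set.Ioi ε := by
        ext y
        simp [hU, Set.mem_iInter]
      rw [this]
      apply isOpen_iInter_of_finite
      intro i
      apply IsOpen.preimage ?_ isOpen_Ioi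
      apply Complex.continuous_re.comp
      apply continuous_finset_sum
      intro l _
      exact continuous_const.mul (continuous_const.mul (continuous_apply l))
    have hy₀U : y₀ ∈ U := by
      intro i
      calc ε < Finset.univ.inf' hne
            (fun i => (∑ l, (τ i (wst l) : ℂ) * (lam * y₀ l)).re) := by
            rw [hε]
            exact half_lt_self (by rw [hε] at hεpos; linarith [hεpos])
        _ ≤ (∑ l, (τ i (wst l) : ℂ) * (lam * y₀ l)).re :=
            Finset.inf'_le _ (Finset.mem_univ i)
    refine ⟨U, hUopen.mem_nhds hy₀U, ((ε / (C0 * ‖lam‖)) ^ M)⁻¹, ?_⟩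
    intro x hx y hyU
    have hx0 : x ≠ 0 := by
      intro h
      have := hx ⟨0, hn⟩
      rw [h] at this
      simp at this
    have hxn : (0:ℝ) < ‖x‖ := norm_pos_iff.mpr hx0
    have hC0pos : (0:ℝ) < C0 := by
      rw [hC0def]
      have : (0:ℝ) ≤ ∑ i, ∑ m, |τ i (wst m)| :=
        Finset.sum_nonneg fun _ _ => Finset.sum_nonneg fun _ _ => abs_nonneg _
      linarith
    have hlamn : (0:ℝ) < ‖lam‖ := norm_pos_iff.mpr hlam
    have hcb : (0:ℝ) < ε / (C0 * ‖lam‖) := by positivity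
    have hest : ε / (C0 * ‖lam‖) * ‖x‖ ≤ ‖∑ l, (x l : ℂ) * y l‖ :=
      psiAux_estimate n hn (fun i l => τ i (w l)) (fun i l => τ i (wst l)) hδ
        C0 hC0 lam hlam y ε hεpos (fun i => (hyU i).le) x hx
    rw [hzpow, norm_inv, norm_pow]
    have hp1 : (ε / (C0 * ‖lam‖) * ‖x‖) ^ M ≤ ‖∑ l, (x l : ℂ) * y l‖ ^ M := by
      gcongr
    have hp2 : (0:ℝ) < (ε / (C0 * ‖lam‖) * ‖x‖) ^ M := by positivity
    calc (‖∑ l, (x l : ℂ) * y l‖ ^ M)⁻¹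
        ≤ ((ε / (C0 * ‖lam‖) * ‖x‖) ^ M)⁻¹ := inv_anti₀ hp2 hp1
      _ = ((ε / (C0 * ‖lam‖)) ^ M)⁻¹ * (‖x‖ ^ M)⁻¹ := by
          rw [mul_pow, mul_inv]
      _ ≤ ((ε / (C0 * ‖lam‖)) ^ M)⁻¹ * Bnd x := by
          apply mul_le_mul_of_nonneg_left (hBndbound x hx0)
          positivity
  have hsub : Summable fun x : {x : Fin n → ℤ //
      ∀ i, 0 < ∑ l, (x l : ℝ) * τ i (w l)} => Bnd x.1 :=
    hBndsum.comp_injective Subtype.val_injective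
  constructor
  · -- summability
    intro y hy
    obtain ⟨U, hUn, c, hbound⟩ := key y hy
    have hyU : y ∈ U := mem_of_mem_nhds hUn
    exact Summable.of_nonneg_of_le (fun x => norm_nonneg _)
      (fun x => hbound x.1 x.2 y hyU) (hsub.mul_left c)
  · -- locally uniform convergence
    apply psiAux_tlu
    intro y₀ hy₀
    obtain ⟨U, hUn, c, hbound⟩ := key y₀ hy₀
    exact ⟨U, hUn, tendstoUniformlyOn_tsum (hsub.mul_left c)
      (fun x y hyU => hbound x.1 x.2 y hyU)⟩
end

section
/- With the same notation, the (n−1)-form η(y) = N_{w^*}(y)^k ψ_{nk,T_{w,+}}(y) ω(y) on Ỹ_{w,+} is Γ_{w,+}-invariant under the action y ↦ (γ^T)^{-1} y: for all γ ∈ Γ_{w,+}, N_{w^*}((γ^T)^{-1}y)^k ψ_{nk,T_{w,+}}((γ^T)^{-1}y) ω((γ^T)^{-1}y) = N_{w^*}(y)^k ψ_{nk,T_{w,+}}(y) ω(y). In particular, (i) N_{w^*}((γ^T)^{-1}y) = N_{w^*}(y), (ii) ψ_{nk,T_{w,+}}((γ^T)^{-1}y) = ψ_{nk,T_{w,+}}(y),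 and (iii) ω(gy) = det(g)·ω(y) for g ∈ GL_n(ℂ), with det(γ) = 1. -/
open scoped BigOperators

open NumberField

/-- The `(n-1)`-form `ω(y) = ∑ (-1)^{i-1} y_i dy_1∧⋯∧\widehat{dy_i}∧⋯∧dy_n`,
viewed as the alternating form `(v_1,…,v_{n-1}) ↦ det(y, v_1, …, v_{n-1})`. -/
noncomputable def omegaForm (m : ℕ) (y : Fin (m + 1) → ℂ)
    (v : Fin m → (Fin (m + 1) → ℂ)) : ℂ :=
  (Matrix.of fun i j => (Fin.cons y v : Fin (m + 1) → Fin (m + 1) → ℂ) j i).det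

/-- the form `η(y) = N_{w^*}(y)^k ψ_{nk,T_{w,+}}(y) ω(y)` is
`Γ_{w,+}`-invariant under `y ↦ (γ^T)^{-1} y`; in particular
(i) `N_{w^*}((γ^T)^{-1} y) = N_{w^*}(y)`,
(ii) `ψ_{nk,T_{w,+}}((γ^T)^{-1} y) = ψ_{nk,T_{w,+}}(y)`, and
(iii) `ω(g y) = det g · ω(y)` for every `g ∈ GL_n(ℂ)` (here `det γ = 1`). -/
theorem eta_form_invariant (F : Type*) [Field F] [NumberField F]
    (m : ℕ) (hdeg : Module.finrank ℚ F = m + 1)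
    (τ : Fin (m + 1) → (F →+* ℝ)) (hτ : Function.Injective τ)
    (𝔞 : FractionalIdeal (nonZeroDivisors (𝓞 F)) F)
    (w : Fin (m + 1) → F)
    (hw : ∀ x : F, x ∈ 𝔞 ↔ ∃ c : Fin (m + 1) → ℤ, x = ∑ l, c l • w l)
    (hwind : LinearIndependent ℤ w)
    (wst : Fin (m + 1) → F)
    (hdual : ∀ i j, Algebra.trace ℚ F (w i * wst j) = if i = j then 1 else 0)
    (k : ℕ) (hk : 1 ≤ k)
    (u : (𝓞 F)ˣ) (hu : ∀ i, 0 < τ i (algebraMap (𝓞 F) F u))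
    (γ : Matrix (Fin (m + 1)) (Fin (m + 1)) ℤ)
    (hγ : ∀ x : Fin (m + 1) → ℤ, (∑ j, γ.mulVec x j • w j)
      = algebraMap (𝓞 F) F u * ∑ j, x j • w j)
    (hγdet : γ.det = 1) :
    (∀ (y : Fin (m + 1) → ℂ) (v : Fin m → (Fin (m + 1) → ℂ)),
      (∏ i, ∑ l, ((γ.map ((↑) : ℤ → ℂ)).transpose⁻¹.mulVec y) l
          * (τ i (wst l) : ℂ)) ^ k
        * (∑' x : {x : Fin (m + 1) → ℤ //
              ∀ i, 0 < ∑ l, (x l : ℝ) * τ i (w l)},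
            (∑ l, (x.1 l : ℂ)
              * ((γ.map ((↑) : ℤ → ℂ)).transpose⁻¹.mulVec y) l)
              ^ (-((m + 1) + (m + 1) * k : ℤ)))
        * omegaForm m ((γ.map ((↑) : ℤ → ℂ)).transpose⁻¹.mulVec y)
            (fun j => (γ.map ((↑) : ℤ → ℂ)).transpose⁻¹.mulVec (v j))
      = (∏ i, ∑ l, y l * (τ i (wst l) : ℂ)) ^ k
        * (∑' x : {x : Fin (m + 1) → ℤ //
              ∀ i, 0 < ∑ l, (x l : ℝ) * τ i (w l)},
            (∑ l, (x.1 l : ℂ) * y l) ^ (-((m + 1) + (m + 1) * k : ℤ)))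
        * omegaForm m y v) ∧
    (∀ y : Fin (m + 1) → ℂ,
      (∏ i, ∑ l, ((γ.map ((↑) : ℤ → ℂ)).transpose⁻¹.mulVec y) l
          * (τ i (wst l) : ℂ))
        = ∏ i, ∑ l, y l * (τ i (wst l) : ℂ)) ∧
    (∀ y : Fin (m + 1) → ℂ,
      (∑' x : {x : Fin (m + 1) → ℤ //
            ∀ i, 0 < ∑ l, (x l : ℝ) * τ i (w l)},
          (∑ l, (x.1 l : ℂ)
            * ((γ.map ((↑) : ℤ → ℂ)).transpose⁻¹.mulVec y) l)
            ^ (-((m + 1) + (m + 1) * k : ℤ)))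
        = ∑' x : {x : Fin (m + 1) → ℤ //
            ∀ i, 0 < ∑ l, (x l : ℝ) * τ i (w l)},
          (∑ l, (x.1 l : ℂ) * y l) ^ (-((m + 1) + (m + 1) * k : ℤ))) ∧
    (∀ (g : Matrix (Fin (m + 1)) (Fin (m + 1)) ℂ) (y : Fin (m + 1) → ℂ)
        (v : Fin m → (Fin (m + 1) → ℂ)),
      omegaForm m (g.mulVec y) (fun j => g.mulVec (v j))
        = g.det * omegaForm m y v) := by
  classical
  set au : F := algebraMap (𝓞 F) F u with hau
  -- the integer inverse of γ
  set γ' : Matrix (Fin (m + 1)) (Fin (m + 1)) ℤ := γ.adjugate with hγ'def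
  have hγγ' : γ * γ' = 1 := by rw [hγ'def, Matrix.mul_adjugate, hγdet, one_smul]
  have hγ'γ : γ' * γ = 1 := by rw [hγ'def, Matrix.adjugate_mul, hγdet, one_smul]
  have hγ'det : γ'.det = 1 := by
    have h := congrArg Matrix.det hγγ'
    rw [Matrix.det_mul, hγdet, one_mul, Matrix.det_one] at h
    exact h
  -- complex picture
  have hmapmul : ∀ (M N : Matrix (Fin (m + 1)) (Fin (m + 1)) ℤ),
      (M * N).map ((↑) : ℤ → ℂ) = M.map ((↑) : ℤ → ℂ) * N.map ((↑) : ℤ → ℂ) := by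
    intro M N
    have := Matrix.map_mul (L := M) (M := N) (f := Int.castRingHom ℂ)
    simpa using this
  set A := (γ.map ((↑) : ℤ → ℂ)).transpose⁻¹ with hAdef
  have hA : A = (γ'.map ((↑) : ℤ → ℂ)).transpose := by
    rw [hAdef]
    apply Matrix.inv_eq_right_inv
    rw [← Matrix.transpose_mul, ← hmapmul, hγ'γ]
    simp
  have hTA1 : (γ.map ((↑) : ℤ → ℂ)).transpose * A = 1 := by
    rw [hA, ← Matrix.transpose_mul, ← hmapmul, hγ'γ]
    simp
  -- action of u on the basis w
  have h_uw : ∀ i, au * w i = ∑ l, (γ l i) • w l := by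
    intro i
    have h := hγ (Pi.single i 1)
    have h1 : ∀ j, γ.mulVec (Pi.single i 1) j = γ j i := by
      intro j
      simp [Matrix.mulVec, dotProduct, Pi.single_apply]
    have h2 : (∑ j, (Pi.single i 1 : Fin (m+1) → ℤ) j • w j) = w i := by
      simp [Pi.single_apply]
    rw [h2] at h
    rw [← h]
    exact Finset.sum_congr rfl fun j _ => by rw [h1 j]
  -- wst is linearly independent over ℚ, hence a basis
  have hwstind : LinearIndependent ℚ wst := by
    rw [Fintype.linearIndependent_iff]
    intro g hg i
    have h := congrArg (fun x => Algebra.trace ℚ F (w i * x)) hg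
    simp only [Finset.mul_sum, map_sum, mul_smul_comm, map_smul, hdual, mul_zero,
      map_zero, smul_eq_mul, mul_ite, mul_one] at h
    simpa using h
  have hwQ : LinearIndependent ℚ w := (LinearIndependent.iff_fractionRing ℤ ℚ).mp hwind
  let Bst : Module.Basis (Fin (m + 1)) ℚ F :=
    basisOfLinearIndependentOfCardEqFinrank hwstind (by simp [hdeg])
  have hBst : ∀ i, Bst i = wst i := fun i => by
    simp [Bst, coe_basisOfLinearIndependentOfCardEqFinrank]
  let Bw : Module.Basis (Fin (m + 1)) ℚ F :=
    basisOfLinearIndependentOfCardEqFinrank hwQ (by simp [hdeg])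
  have hBw : ∀ i, Bw i = w i := fun i => by
    simp [Bw, coe_basisOfLinearIndependentOfCardEqFinrank]
  -- action of u on the dual basis wst
  have key : ∀ j, au * wst j = ∑ l, (γ j l : ℚ) • wst l := by
    intro j
    have hnd := traceForm_nondegenerate ℚ F
    rw [← sub_eq_zero]
    apply hnd.1
    intro y
    have hbasis : ∀ i, (Algebra.traceForm ℚ F) (au * wst j - ∑ l, (γ j l : ℚ) • wst l) (w i) = 0 := by
      intro i
      have e1 : Algebra.trace ℚ F ((au * wst j) * w i) = (γ j i : ℚ) := by
        have : (au * wst j) * w i = (∑ l, (γ l i) • w l) * wst j := by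
          rw [← h_uw i]; ring
        rw [this, Finset.sum_mul]
        simp only [smul_mul_assoc, map_sum, map_zsmul, hdual]
        simp
      have e2 : Algebra.trace ℚ F ((∑ l, (γ j l : ℚ) • wst l) * w i) = (γ j i : ℚ) := by
        rw [Finset.sum_mul]
        simp only [smul_mul_assoc, map_sum, map_smul]
        have : ∀ l, Algebra.trace ℚ F (wst l * w i) = if i = l then 1 else 0 := by
          intro l; rw [mul_comm]; exact hdual i l
        simp [this, smul_eq_mul]
      rw [map_sub, LinearMap.sub_apply, Algebra.traceForm_apply, Algebra.traceForm_apply,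
        e1, e2, sub_self]
    have hrep := Bw.sum_repr y
    rw [← hrep]
    rw [map_sum]
    refine Finset.sum_eq_zero fun i _ => ?_
    rw [map_smul, hBw i, hbasis i]
    simp
  -- the key identity over ℝ
  have key' : ∀ i j, ∑ l, (γ j l : ℝ) * τ i (wst l) = τ i au * τ i (wst j) := by
    intro i j
    have h := congrArg (τ i) (key j)
    rw [map_mul, map_sum] at h
    simp only [Rat.smul_def, map_mul, map_ratCast] at h
    push_cast at h
    exact h.symm
  -- the key identity over ℂ
  have keyC : ∀ i j, ∑ l, (γ j l : ℂ) * (τ i (wst l) : ℂ)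
      = (τ i au : ℂ) * (τ i (wst j) : ℂ) := by
    intro i j
    have h := congrArg (fun r : ℝ => (r : ℂ)) (key' i j)
    push_cast at h
    exact h
  -- the matrix T of the embeddings of wst is nonsingular
  set T : Matrix (Fin (m + 1)) (Fin (m + 1)) ℝ := Matrix.of fun i l => τ i (wst l) with hT
  have hTdet : T.det ≠ 0 := by
    intro h0
    obtain ⟨vv, hvv0, hvvT⟩ := Matrix.exists_vecMul_eq_zero_iff.mpr h0
    have hinj : Function.Injective (fun i => (τ i).toMonoidHom) := by
      intro a b hab
      exact hτ (DFunLike.ext _ _ fun x => DFunLike.congr_fun hab x)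
    have hLI := (linearIndependent_monoidHom F ℝ).comp _ hinj
    rw [Fintype.linearIndependent_iff] at hLI
    refine hvv0 (funext fun i => ?_)
    refine hLI vv ?_ i
    funext x
    have hrep := Bst.sum_repr x
    simp only [Function.comp, Finset.sum_apply, Pi.smul_apply, Pi.zero_apply,
      RingHom.coe_monoidHom_mk]
    have hτx : ∀ i', τ i' x = ∑ l, (Bst.repr x l : ℝ) * τ i' (wst l) := by
      intro i'
      conv_lhs => rw [← hrep]
      rw [map_sum]
      refine Finset.sum_congr rfl fun l _ => ?_
      rw [hBst l, Rat.smul_def, map_mul, map_ratCast]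
    have : ∑ i', vv i' • τ i' x = ∑ l, (Bst.repr x l : ℝ) * (Matrix.vecMul vv T) l := by
      simp only [hτx, smul_eq_mul, Finset.mul_sum, Matrix.vecMul, dotProduct,
        Finset.sum_mul, hT, Matrix.of_apply]
      rw [Finset.sum_comm]
      exact Finset.sum_congr rfl fun l _ => Finset.sum_congr rfl fun i' _ => by ring
    calc (∑ i', vv i' • ((τ i').toMonoidHom : F → ℝ) x) = ∑ i', vv i' • τ i' x := rfl
      _ = ∑ l, (Bst.repr x l : ℝ) * (Matrix.vecMul vv T) l := this
      _ = 0 := by rw [show Matrix.vecMul vv T = 0 from hvvT]; simp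
  -- T * γᵀ = diag(τ i u) * T, hence ∏ τ i u = 1
  have hTγ : T * (γ.transpose.map ((↑) : ℤ → ℝ)) = (Matrix.diagonal fun i => τ i au) * T := by
    ext i j
    rw [Matrix.diagonal_mul]
    simp only [Matrix.mul_apply, hT, Matrix.of_apply, Matrix.map_apply,
      Matrix.transpose_apply]
    calc ∑ l, τ i (wst l) * (γ j l : ℝ) = ∑ l, (γ j l : ℝ) * τ i (wst l) := by
          exact Finset.sum_congr rfl fun l _ => mul_comm _ _
      _ = τ i au * τ i (wst j) := key' i j
  have hprod : (∏ i, τ i au) = 1 := by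
    have h := congrArg Matrix.det hTγ
    rw [Matrix.det_mul, Matrix.det_mul, Matrix.det_diagonal] at h
    have hdt : (γ.transpose.map ((↑) : ℤ → ℝ)).det = 1 := by
      have := RingHom.map_det (Int.castRingHom ℝ) γ.transpose
      rw [Matrix.det_transpose, hγdet] at this
      simpa using this.symm
    rw [hdt, mul_one] at h
    have h' : (∏ i, τ i au) * T.det = 1 * T.det := by rw [one_mul, ← h]
    exact mul_right_cancel₀ hTdet h'
  have hprodC : (∏ i, (τ i au : ℂ)) = 1 := by
    have h := congrArg (fun r : ℝ => (r : ℂ)) hprod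
    push_cast at h
    exact h
  -- expansion lemma over ℂ
  have hexp : ∀ (z : Fin (m + 1) → ℂ) i,
      ∑ l, ((γ.map ((↑) : ℤ → ℂ)).transpose.mulVec z) l * (τ i (wst l) : ℂ)
        = (τ i au : ℂ) * ∑ j, z j * (τ i (wst j) : ℂ) := by
    intro z i
    have hmv : ∀ l, ((γ.map ((↑) : ℤ → ℂ)).transpose.mulVec z) l
        = ∑ j, (γ j l : ℂ) * z j := by
      intro l
      simp [Matrix.mulVec, dotProduct, Matrix.transpose_apply, Matrix.map_apply]
    calc ∑ l, ((γ.map ((↑) : ℤ → ℂ)).transpose.mulVec z) l * (τ i (wst l) : ℂ)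
        = ∑ l, ∑ j, (γ j l : ℂ) * z j * (τ i (wst l) : ℂ) := by
          refine Finset.sum_congr rfl fun l _ => ?_
          rw [hmv l, Finset.sum_mul]
      _ = ∑ j, ∑ l, (γ j l : ℂ) * z j * (τ i (wst l) : ℂ) := Finset.sum_comm
      _ = ∑ j, z j * ∑ l, (γ j l : ℂ) * (τ i (wst l) : ℂ) := by
          refine Finset.sum_congr rfl fun j _ => ?_
          rw [Finset.mul_sum]
          exact Finset.sum_congr rfl fun l _ => by ring
      _ = ∑ j, z j * ((τ i au : ℂ) * (τ i (wst j) : ℂ)) := by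
          refine Finset.sum_congr rfl fun j _ => ?_
          rw [keyC i j]
      _ = (τ i au : ℂ) * ∑ j, z j * (τ i (wst j) : ℂ) := by
          rw [Finset.mul_sum]
          exact Finset.sum_congr rfl fun j _ => by ring
  -- conjunct (ii): invariance of the product N
  have h2 : ∀ y : Fin (m + 1) → ℂ,
      (∏ i, ∑ l, (A.mulVec y) l * (τ i (wst l) : ℂ))
        = ∏ i, ∑ l, y l * (τ i (wst l) : ℂ) := by
    intro y
    have hz : ∀ i, ∑ l, y l * (τ i (wst l) : ℂ)
        = (τ i au : ℂ) * ∑ l, (A.mulVec y) l * (τ i (wst l) : ℂ) := by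
      intro i
      have h := hexp (A.mulVec y) i
      rwa [Matrix.mulVec_mulVec, hTA1, Matrix.one_mulVec] at h
    calc (∏ i, ∑ l, (A.mulVec y) l * (τ i (wst l) : ℂ))
        = 1 * ∏ i, ∑ l, (A.mulVec y) l * (τ i (wst l) : ℂ) := (one_mul _).symm
      _ = (∏ i, (τ i au : ℂ)) * ∏ i, ∑ l, (A.mulVec y) l * (τ i (wst l) : ℂ) := by
          rw [hprodC]
      _ = ∏ i, ((τ i au : ℂ) * ∑ l, (A.mulVec y) l * (τ i (wst l) : ℂ)) := by
          rw [Finset.prod_mul_distrib]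
      _ = ∏ i, ∑ l, y l * (τ i (wst l) : ℂ) := by
          exact Finset.prod_congr rfl fun i _ => (hz i).symm
  -- positivity transport
  have hposfac : ∀ (x : Fin (m + 1) → ℤ) i,
      ∑ l, ((γ.mulVec x) l : ℝ) * τ i (w l) = τ i au * ∑ l, (x l : ℝ) * τ i (w l) := by
    intro x i
    have h := congrArg (τ i) (hγ x)
    rw [map_sum, map_mul, map_sum] at h
    simp only [zsmul_eq_mul, map_mul, map_intCast] at h
    push_cast at h
    exact h
  have hcone : ∀ x : Fin (m + 1) → ℤ,
      (∀ i, 0 < ∑ l, (x l : ℝ) * τ i (w l)) ↔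
      (∀ i, 0 < ∑ l, ((γ.mulVec x) l : ℝ) * τ i (w l)) := by
    intro x
    constructor
    · intro h i
      rw [hposfac x i]
      exact mul_pos (hu i) (h i)
    · intro h i
      have h' := h i
      rw [hposfac x i] at h'
      nlinarith [hu i, h i, h']
  -- the reindexing equivalence
  set S := {x : Fin (m + 1) → ℤ // ∀ i, 0 < ∑ l, (x l : ℝ) * τ i (w l)} with hS
  have hγ'γvec : ∀ x : Fin (m + 1) → ℤ, γ'.mulVec (γ.mulVec x) = x := by
    intro x; rw [Matrix.mulVec_mulVec, hγ'γ, Matrix.one_mulVec]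
  have hγγ'vec : ∀ x : Fin (m + 1) → ℤ, γ.mulVec (γ'.mulVec x) = x := by
    intro x; rw [Matrix.mulVec_mulVec, hγγ', Matrix.one_mulVec]
  let e : S ≃ S :=
    { toFun := fun x => ⟨γ.mulVec x.1, (hcone x.1).mp x.2⟩
      invFun := fun x => ⟨γ'.mulVec x.1, by
        refine (hcone (γ'.mulVec x.1)).mpr ?_
        rw [hγγ'vec x.1]
        exact x.2⟩
      left_inv := fun x => Subtype.ext (hγ'γvec x.1)
      right_inv := fun x => Subtype.ext (hγγ'vec x.1) }
  -- the inner product identity for the tsum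
  have hterm : ∀ (y : Fin (m + 1) → ℂ) (x : Fin (m + 1) → ℤ),
      (∑ l, (x l : ℂ) * (A.mulVec y) l) = ∑ l, ((γ'.mulVec x l : ℤ) : ℂ) * y l := by
    intro y x
    have hmv : ∀ l, (A.mulVec y) l = ∑ j, (γ' j l : ℂ) * y j := by
      intro l
      rw [hA]
      simp [Matrix.mulVec, dotProduct, Matrix.transpose_apply, Matrix.map_apply]
    calc (∑ l, (x l : ℂ) * (A.mulVec y) l)
        = ∑ l, ∑ j, (x l : ℂ) * ((γ' j l : ℂ) * y j) := by
          refine Finset.sum_congr rfl fun l _ => ?_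
          rw [hmv l, Finset.mul_sum]
      _ = ∑ j, ∑ l, (x l : ℂ) * ((γ' j l : ℂ) * y j) := Finset.sum_comm
      _ = ∑ j, (∑ l, (γ' j l : ℂ) * (x l : ℂ)) * y j := by
          refine Finset.sum_congr rfl fun j _ => ?_
          rw [Finset.sum_mul]
          exact Finset.sum_congr rfl fun l _ => by ring
      _ = ∑ j, ((γ'.mulVec x j : ℤ) : ℂ) * y j := by
          refine Finset.sum_congr rfl fun j _ => ?_
          congr 1
          simp [Matrix.mulVec, dotProduct]
  -- conjunct (iii): invariance of ψ
  have h3 : ∀ y : Fin (m + 1) → ℂ,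
      (∑' x : S, (∑ l, (x.1 l : ℂ) * (A.mulVec y) l) ^ (-((m + 1) + (m + 1) * k : ℤ)))
        = ∑' x : S, (∑ l, (x.1 l : ℂ) * y l) ^ (-((m + 1) + (m + 1) * k : ℤ)) := by
    intro y
    have step1 : (∑' x : S, (∑ l, (x.1 l : ℂ) * (A.mulVec y) l) ^ (-((m + 1) + (m + 1) * k : ℤ)))
        = ∑' x : S, (∑ l, (((e.symm x).1 l : ℤ) : ℂ) * y l) ^ (-((m + 1) + (m + 1) * k : ℤ)) := by
      refine tsum_congr fun x => ?_
      rw [hterm y x.1]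
      rfl
    rw [step1]
    exact Equiv.tsum_eq e.symm (fun x : S => (∑ l, (x.1 l : ℂ) * y l) ^ (-((m + 1) + (m + 1) * k : ℤ)))
  -- conjunct (iv): omega transforms by the determinant
  have h4 : ∀ (g : Matrix (Fin (m + 1)) (Fin (m + 1)) ℂ) (y : Fin (m + 1) → ℂ)
      (v : Fin m → (Fin (m + 1) → ℂ)),
      omegaForm m (g.mulVec y) (fun j => g.mulVec (v j)) = g.det * omegaForm m y v := by
    intro g y v
    unfold omegaForm
    have hmat : (Matrix.of fun i j =>
        (Fin.cons (g.mulVec y) (fun j => g.mulVec (v j)) : Fin (m + 1) → Fin (m + 1) → ℂ) j i)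
        = g * (Matrix.of fun i j => (Fin.cons y v : Fin (m + 1) → Fin (m + 1) → ℂ) j i) := by
      ext i j
      refine Fin.cases ?_ ?_ j
      · simp [Matrix.mul_apply, Matrix.mulVec, dotProduct]
      · intro j'
        simp [Matrix.mul_apply, Matrix.mulVec, dotProduct]
    rw [hmat, Matrix.det_mul]
  have hdetA : A.det = 1 := by
    rw [hA, Matrix.det_transpose]
    have := RingHom.map_det (Int.castRingHom ℂ) γ'
    rw [hγ'det] at this
    simpa using this.symm
  refine ⟨?_, h2, h3, ?_⟩
  · intro y v
    rw [h2 y, h3 y, h4 A y v, hdetA, one_mul]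
  · exact h4
end
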